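/- Assuming which for all integers q ≥ 1 and every centered Gaussian vector (G_1,...,G_d) with unit variances one has E[G_1^{2q}⋯G_d^{2q}] ≥ ∏_i E[G_i^{2q}], then for any d ≥ 2 and any unit vectors x_1,...,x_d ∈ ℝ^d there exists a unit vector v ∈ ℝ^d with |⟨v,x_1⟩ ⋯ ⟨v,x_d⟩| ≥ d^{-d/2}. -/

import Mathlib

open MeasureTheory

/-- The standard Gaussian measure on `ℝ^n` (as `Fin n → ℝ`). -/
noncomputable def stdGaussian (n : ℕ) : Measure (Fin n → ℝ) :=
  Measure.pi fun _ => ProbabilityTheory.gaussianReal 0 1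

section GPCproof

open MeasureTheory ProbabilityTheory Real Filter Finset Set Asymptotics Topology

namespace GPCaux

/-- Polynomial times Gaussian is integrable (w.r.t. Lebesgue). -/
lemma integrable_poly_gauss (n : ℕ) :
    Integrable (fun y : ℝ => y ^ n * rexp (-(1/2) * y ^ 2)) := by
  have key : ∀ y : ℝ, ‖y ^ n * rexp (-(1/2) * y ^ 2)‖ ≤
      ((n.factorial : ℝ) * rexp 1) * rexp (-(1/4) * y ^ 2) := by
    intro y
    have h1 : |y| ^ n ≤ (n.factorial : ℝ) * rexp |y| := by
      have h2 : |y| ^ n / (n.factorial : ℝ) ≤ rexp |y| := by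
        refine le_trans ?_ (Real.sum_le_exp_of_nonneg (abs_nonneg y) (n+1))
        exact Finset.single_le_sum (f := fun i => |y| ^ i / (i.factorial : ℝ))
          (fun i _ => by positivity) (Finset.self_mem_range_succ n)
      calc |y| ^ n = (|y| ^ n / (n.factorial : ℝ)) * (n.factorial : ℝ) := by
            field_simp
        _ ≤ rexp |y| * (n.factorial : ℝ) := by
            apply mul_le_mul_of_nonneg_right h2 (by positivity)
        _ = (n.factorial : ℝ) * rexp |y| := by ring
    have h3 : |y| + (-(1/2) * y ^ 2) ≤ 1 + (-(1/4) * y ^ 2) := by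
      nlinarith [sq_nonneg (1 - |y|/2), sq_abs y]
    calc ‖y ^ n * rexp (-(1/2) * y ^ 2)‖ = |y| ^ n * rexp (-(1/2) * y ^ 2) := by
          rw [norm_mul, Real.norm_eq_abs, Real.norm_eq_abs, abs_pow,
            abs_of_pos (Real.exp_pos _)]
      _ ≤ ((n.factorial : ℝ) * rexp |y|) * rexp (-(1/2) * y ^ 2) := by
          apply mul_le_mul_of_nonneg_right h1 (Real.exp_pos _).le
      _ = (n.factorial : ℝ) * rexp (|y| + (-(1/2) * y ^ 2)) := by
          rw [mul_assoc, ← Real.exp_add]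
      _ ≤ (n.factorial : ℝ) * rexp (1 + (-(1/4) * y ^ 2)) := by
          apply mul_le_mul_of_nonneg_left (Real.exp_le_exp.2 h3) (by positivity)
      _ = ((n.factorial : ℝ) * rexp 1) * rexp (-(1/4) * y ^ 2) := by
          rw [Real.exp_add]; ring
  refine Integrable.mono' ((integrable_exp_neg_mul_sq (by norm_num : (0:ℝ) < 1/4)).const_mul _)
    ?_ (Eventually.of_forall key)
  exact ((measurable_id.pow_const n).mul
    (((measurable_id.pow_const 2).const_mul _).exp)).aestronglyMeasurable

/-- The Gaussian primitive tends to zero at `+∞`. -/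
lemma tendsto_poly_gauss_atTop (n : ℕ) :
    Tendsto (fun y : ℝ => y ^ n * rexp (-(1/2) * y ^ 2)) atTop (𝓝 0) := by
  have h := (rpow_mul_exp_neg_mul_sq_isLittleO_exp_neg (by norm_num : (0:ℝ) < 1/2)
    (n : ℝ)).trans_tendsto ?_
  · refine h.congr' ?_
    filter_upwards [eventually_gt_atTop (0:ℝ)] with y hy
    rw [Real.rpow_natCast]
  · have hlin : Tendsto (fun y : ℝ => -(1/2) * y) atTop atBot := by
      simp_rw [neg_mul]
      exact tendsto_neg_atTop_atBot.comp (tendsto_id.const_mul_atTop one_half_pos)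
    exact Real.tendsto_exp_atBot.comp hlin

lemma tendsto_poly_gauss_atBot (n : ℕ) :
    Tendsto (fun y : ℝ => y ^ n * rexp (-(1/2) * y ^ 2)) atBot (𝓝 0) := by
  rw [tendsto_zero_iff_norm_tendsto_zero]
  have habs : Tendsto (fun y : ℝ => |y| ^ n * rexp (-(1/2) * |y| ^ 2)) atBot (𝓝 0) :=
    (tendsto_poly_gauss_atTop n).comp tendsto_abs_atBot_atTop
  refine habs.congr (fun y => ?_)
  rw [sq_abs]
  rw [norm_mul, Real.norm_eq_abs, Real.norm_eq_abs, abs_pow, abs_of_pos (Real.exp_pos _)]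

/-- Integration by parts recursion for Gaussian moments. -/
lemma integral_poly_gauss_succ (n : ℕ) :
    ∫ y : ℝ, y ^ (n+2) * rexp (-(1/2) * y ^ 2)
      = (n+1) * ∫ y : ℝ, y ^ n * rexp (-(1/2) * y ^ 2) := by
  set J : ℕ → ℝ := fun m => ∫ y : ℝ, y ^ m * rexp (-(1/2) * y ^ 2) with hJ
  set F : ℝ → ℝ := fun y => -(y ^ (n+1) * rexp (-(1/2) * y ^ 2)) with hF
  set F' : ℝ → ℝ := fun y =>
    y ^ (n+2) * rexp (-(1/2) * y ^ 2) - (n+1) * (y ^ n * rexp (-(1/2) * y ^ 2)) with hF'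
  have hderiv : ∀ y : ℝ, HasDerivAt F (F' y) y := by
    intro y
    have h1 : HasDerivAt (fun y : ℝ => y ^ (n+1)) ((n+1) * y ^ n) y := by
      simpa using hasDerivAt_pow (n+1) y
    have h2 : HasDerivAt (fun y : ℝ => rexp (-(1/2) * y ^ 2))
        (rexp (-(1/2) * y ^ 2) * (-(1/2) * (2 * y))) y := by
      have := (((hasDerivAt_pow 2 y).const_mul (-(1/2 : ℝ))).exp)
      convert this using 1
      simp
    have := (h1.mul h2).neg
    refine this.congr_deriv ?_
    simp only [hF']
    ring
  have hint : Integrable F' := by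
    have := (integrable_poly_gauss (n+2)).sub ((integrable_poly_gauss n).const_mul ((n:ℝ)+1))
    exact this
  have hF0 : F 0 = 0 := by simp [hF]
  have htop : Tendsto F atTop (𝓝 (0:ℝ)) := by
    have h := (tendsto_poly_gauss_atTop (n+1)).neg
    rw [neg_zero] at h; exact h
  have hbot : Tendsto F atBot (𝓝 (0:ℝ)) := by
    have h := (tendsto_poly_gauss_atBot (n+1)).neg
    rw [neg_zero] at h; exact h
  have hIoi : ∫ y in Ioi (0:ℝ), F' y = 0 - F 0 :=
    integral_Ioi_of_hasDerivAt_of_tendsto' (fun y _ => hderiv y) hint.integrableOn htop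
  have hIic : ∫ y in Iic (0:ℝ), F' y = F 0 - 0 :=
    integral_Iic_of_hasDerivAt_of_tendsto (hderiv 0).continuousAt.continuousWithinAt
      (fun y _ => hderiv y) hint.integrableOn hbot
  have hsum : ∫ y : ℝ, F' y = 0 := by
    rw [← intervalIntegral.integral_Iic_add_Ioi hint.integrableOn hint.integrableOn, hIoi, hIic, hF0]
    ring
  have hsplit : ∫ y : ℝ, F' y = J (n+2) - (n+1) * J n := by
    rw [hF']
    rw [integral_sub (integrable_poly_gauss (n+2))
      ((integrable_poly_gauss n).const_mul ((n:ℝ)+1)), integral_const_mul]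

  have := hsplit.symm.trans hsum
  linarith [this]

lemma pdf_eq (y : ℝ) :
    gaussianPDFReal 0 1 y = (√(2 * π))⁻¹ * rexp (-(1/2) * y ^ 2) := by
  simp only [gaussianPDFReal, NNReal.coe_one, mul_one, sub_zero]
  congr 1
  ring

lemma integral_gauss_eq (g : ℝ → ℝ) :
    ∫ y, g y ∂(gaussianReal 0 1) = ∫ y, gaussianPDFReal 0 1 y * g y := by
  rw [gaussianReal_of_var_ne_zero 0 one_ne_zero, gaussianPDF_def]
  have hmeas : Measurable (fun y : ℝ => (gaussianPDFReal 0 1 y).toNNReal) :=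
    measurable_real_toNNReal.comp (measurable_gaussianPDFReal 0 1)
  have h : ∀ y : ℝ, ENNReal.ofReal (gaussianPDFReal 0 1 y)
      = ((gaussianPDFReal 0 1 y).toNNReal : ENNReal) := fun y => rfl
  simp_rw [h]
  rw [integral_withDensity_eq_integral_smul hmeas]
  congr 1
  ext y
  simp only [Function.comp_apply, NNReal.smul_def, smul_eq_mul]
  rw [Real.coe_toNNReal _ (gaussianPDFReal_nonneg 0 1 y)]

lemma integrable_gauss_iff (g : ℝ → ℝ) :
    Integrable g (gaussianReal 0 1) ↔
      Integrable (fun y => gaussianPDFReal 0 1 y * g y) := by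
  rw [gaussianReal_of_var_ne_zero 0 one_ne_zero, gaussianPDF_def]
  have hmeas : Measurable (fun y : ℝ => (gaussianPDFReal 0 1 y).toNNReal) :=
    measurable_real_toNNReal.comp (measurable_gaussianPDFReal 0 1)
  have h : ∀ y : ℝ, ENNReal.ofReal (gaussianPDFReal 0 1 y)
      = ((gaussianPDFReal 0 1 y).toNNReal : ENNReal) := fun y => rfl
  simp_rw [h]
  rw [integrable_withDensity_iff_integrable_smul hmeas]
  constructor <;> intro hh <;> refine hh.congr (Eventually.of_forall fun y => ?_) <;>
    simp only [Function.comp_apply, NNReal.smul_def, smul_eq_mul] <;>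
    rw [Real.coe_toNNReal _ (gaussianPDFReal_nonneg 0 1 y)]

lemma integrable_pow_gauss (n : ℕ) :
    Integrable (fun y : ℝ => y ^ n) (gaussianReal 0 1) := by
  rw [integrable_gauss_iff]
  have : (fun y : ℝ => gaussianPDFReal 0 1 y * y ^ n)
      = fun y : ℝ => (√(2 * π))⁻¹ * (y ^ n * rexp (-(1/2) * y ^ 2)) := by
    ext y; rw [pdf_eq]; ring
  rw [this]
  exact (integrable_poly_gauss n).const_mul _

/-- Gaussian moments as Lebesgue integrals. -/
lemma moment_eq (n : ℕ) :
    ∫ y, y ^ n ∂(gaussianReal 0 1)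
      = (√(2 * π))⁻¹ * ∫ y : ℝ, y ^ n * rexp (-(1/2) * y ^ 2) := by
  rw [integral_gauss_eq, ← integral_const_mul]
  congr 1; ext y; rw [pdf_eq]; ring

lemma moment_succ_succ (n : ℕ) :
    ∫ y, y ^ (n+2) ∂(gaussianReal 0 1) = (n+1) * ∫ y, y ^ n ∂(gaussianReal 0 1) := by
  rw [moment_eq, moment_eq, integral_poly_gauss_succ]
  ring

lemma moment_zero : ∫ y, y ^ 0 ∂(gaussianReal 0 1) = 1 := by
  simp

lemma moment_odd (k : ℕ) : ∫ y, y ^ (2*k+1) ∂(gaussianReal 0 1) = 0 := by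
  rw [moment_eq]
  have hodd : ∫ y : ℝ, y ^ (2*k+1) * rexp (-(1/2) * y ^ 2) = 0 := by
    have hneg := MeasureTheory.integral_neg_eq_self
      (fun y : ℝ => y ^ (2*k+1) * rexp (-(1/2) * y ^ 2)) (volume : Measure ℝ)
    have : ∀ y : ℝ, (-y) ^ (2*k+1) * rexp (-(1/2) * (-y) ^ 2)
        = -(y ^ (2*k+1) * rexp (-(1/2) * y ^ 2)) := by
      intro y
      rw [Odd.neg_pow ⟨k, by ring⟩, neg_sq]
      ring
    simp_rw [this, integral_neg] at hneg
    linarith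
  rw [hodd, mul_zero]

lemma moment_even (k : ℕ) :
    ∫ y, y ^ (2*k) ∂(gaussianReal 0 1)
      = ((2*k).factorial : ℝ) / (2^k * (k.factorial : ℝ)) := by
  induction k with
  | zero => simpa using moment_zero
  | succ k ih =>
    have h : 2*(k+1) = 2*k+2 := by ring
    rw [h, moment_succ_succ, ih]
    have h2 : (((2*k+2)).factorial : ℝ) = (2*(k:ℝ)+2) * ((2*(k:ℝ)+1) * ((2*k).factorial : ℝ)) := by
      have h4 : 2*k+2 = (2*k+1)+1 := by ring
      rw [h4, Nat.factorial_succ, Nat.factorial_succ]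
      push_cast; ring
    have h3 : ((k+1).factorial : ℝ) = ((k:ℝ)+1) * (k.factorial : ℝ)  := by
      rw [Nat.factorial_succ]; push_cast; ring
    rw [h2, h3]
    have hf : ((2*k).factorial : ℝ) ≠ 0 := Nat.cast_ne_zero.mpr (Nat.factorial_ne_zero _)
    have hk : (k.factorial : ℝ) ≠ 0 := Nat.cast_ne_zero.mpr (Nat.factorial_ne_zero _)
    field_simp
    push_cast
    ring

instance (d : ℕ) : IsProbabilityMeasure (stdGaussian d) := by
  unfold _root_.stdGaussian; infer_instance

lemma integral_std_prod {d : ℕ} (f : Fin d → ℝ → ℝ) :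
    ∫ x, ∏ i, f i (x i) ∂(stdGaussian d) = ∏ i, ∫ y, f i y ∂(gaussianReal 0 1) := by
  letI : MeasureSpace ℝ := ⟨gaussianReal 0 1⟩
  haveI : SigmaFinite (volume : Measure ℝ) :=
    inferInstanceAs (SigmaFinite (gaussianReal 0 1))
  have h := MeasureTheory.integral_fintype_prod_eq_prod (𝕜 := ℝ)
    (fun i (y : ℝ) => f i y) (μ := fun _ => gaussianReal 0 1)
  have hv : (volume : Measure (Fin d → ℝ)) = stdGaussian d := by
    rw [MeasureTheory.volume_pi]; rfl
  exact h

lemma integrable_std_prod {d : ℕ} (f : Fin d → ℝ → ℝ)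
    (hf : ∀ i, Integrable (f i) (gaussianReal 0 1)) :
    Integrable (fun x : Fin d → ℝ => ∏ i, f i (x i)) (stdGaussian d) := by
  letI : MeasureSpace ℝ := ⟨gaussianReal 0 1⟩
  haveI : SigmaFinite (volume : Measure ℝ) :=
    inferInstanceAs (SigmaFinite (gaussianReal 0 1))
  have h := MeasureTheory.Integrable.fintype_prod_dep (𝕜 := ℝ)
    (f := fun i (y : ℝ) => f i y) (fun i => hf i)
  have hv : (volume : Measure (Fin d → ℝ)) = stdGaussian d := by
    rw [MeasureTheory.volume_pi]; rfl
  exact h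

lemma choose_central_le (c : ℕ) : ((2*c).choose c : ℝ) ≤ 4 ^ c := by
  have h : (2*c).choose c ≤ 2 ^ (2*c) := by
    calc (2*c).choose c ≤ ∑ m ∈ range (2*c+1), (2*c).choose m :=
          Finset.single_le_sum (f := fun m => (2*c).choose m) (fun i _ => Nat.zero_le _)
            (by simp [Finset.mem_range]; omega)
      _ = 2 ^ (2*c) := Nat.sum_range_choose (2*c)
  calc ((2*c).choose c : ℝ) ≤ (2:ℝ) ^ (2*c) := by exact_mod_cast h
    _ = 4 ^ c := by rw [pow_mul]; norm_num

lemma moment_even_eq_choose (c : ℕ) :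
    ∫ y, y ^ (2*c) ∂(gaussianReal 0 1)
      = ((2*c).choose c : ℝ) * (c.factorial : ℝ) / 2 ^ c := by
  rw [moment_even]
  have h : ((2*c).factorial : ℝ) = ((2*c).choose c : ℝ) * (c.factorial : ℝ) * (c.factorial : ℝ) := by
    have := Nat.choose_mul_factorial_mul_factorial (show c ≤ 2*c by omega)
    rw [show 2*c - c = c by omega] at this
    exact_mod_cast this.symm
  rw [h]
  have hc : (c.factorial : ℝ) ≠ 0 := Nat.cast_ne_zero.mpr (Nat.factorial_ne_zero _)
  field_simp

lemma moment_even_nonneg (c : ℕ) : 0 ≤ ∫ y, y ^ (2*c) ∂(gaussianReal 0 1) := by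
  rw [moment_even]; positivity

/-- The integral of a monomial against the standard Gaussian. -/
lemma integral_std_monomial {d : ℕ} (a : Fin d → ℕ) :
    ∫ x, ∏ j, x j ^ a j ∂(stdGaussian d) = ∏ j, ∫ y, y ^ a j ∂(gaussianReal 0 1) :=
  integral_std_prod (fun j y => y ^ a j)

lemma integrable_std_monomial {d : ℕ} (a : Fin d → ℕ) :
    Integrable (fun x : Fin d → ℝ => ∏ j, x j ^ a j) (stdGaussian d) :=
  integrable_std_prod (fun j y => y ^ a j) (fun j => integrable_pow_gauss (a j))

/-- Multinomial-type identity between a doubled multinomial coefficient and Gaussian moments. -/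
lemma key_identity {d : ℕ} (q : ℕ) (b : Fin d → ℕ) (hb : ∑ j, b j = q) :
    (Nat.multinomial univ (fun j => 2 * b j) : ℝ)
        * ∏ j, ((2*(b j)).factorial : ℝ) / (2 ^ (b j) * ((b j).factorial : ℝ))
      = (((2*q).factorial : ℝ) / (2^q * (q.factorial : ℝ)))
        * (Nat.multinomial univ b : ℝ) := by
  have h1 := Nat.multinomial_spec univ b
  rw [hb] at h1
  have h2 := Nat.multinomial_spec univ (fun j => 2 * b j)
  rw [show ∑ j, 2 * b j = 2 * q by rw [← Finset.mul_sum, hb]] at h2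
  have h1R : (∏ j, ((b j).factorial : ℝ)) * (Nat.multinomial univ b : ℝ)
      = (q.factorial : ℝ) := by exact_mod_cast h1
  have h2R : (∏ j, ((2 * b j).factorial : ℝ)) * (Nat.multinomial univ (fun j => 2 * b j) : ℝ)
      = ((2*q).factorial : ℝ) := by exact_mod_cast h2
  have hprod2 : ∏ j, (2:ℝ) ^ (b j) = 2 ^ q := by
    rw [Finset.prod_pow_eq_pow_sum, hb]
  rw [Finset.prod_div_distrib, Finset.prod_mul_distrib, hprod2]
  have hP1 : (∏ j, ((b j).factorial : ℝ)) ≠ 0 :=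
    Finset.prod_ne_zero_iff.mpr fun j _ => Nat.cast_ne_zero.mpr (Nat.factorial_ne_zero _)
  have hq : (q.factorial : ℝ) ≠ 0 := Nat.cast_ne_zero.mpr (Nat.factorial_ne_zero _)
  have h2q : (2:ℝ) ^ q ≠ 0 := by positivity
  have hM1 : (Nat.multinomial univ b : ℝ) ≠ 0 :=
    Nat.cast_ne_zero.mpr (Nat.multinomial_pos _ _).ne'
  have hM2P2 : (Nat.multinomial univ (fun j => 2 * b j) : ℝ)
      * (∏ j, ((2 * b j).factorial : ℝ)) = ((2*q).factorial : ℝ) := by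
    rw [mul_comm]; exact h2R
  rw [← mul_div_assoc, hM2P2, div_mul_eq_mul_div, ← h1R, ← mul_assoc]
  exact (mul_div_mul_right _ _ hM1).symm

/-- Lower bound for the (2q)-th moment of a unit linear combination of coordinates. -/
lemma moment_inner_ge {d : ℕ} (q : ℕ) (u : Fin d → ℝ) (hu : ∑ j, u j ^ 2 = 1) :
    ((2*q).factorial : ℝ) / (2^q * (q.factorial : ℝ))
      ≤ ∫ x, (∑ j, u j * x j) ^ (2*q) ∂(stdGaussian d) := by
  -- expand the power
  have hexp : ∀ x : Fin d → ℝ, (∑ j, u j * x j) ^ (2*q)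
      = ∑ a ∈ piAntidiag univ (2*q),
          ((Nat.multinomial univ a : ℝ) * ∏ j, u j ^ a j) * ∏ j, x j ^ a j := by
    intro x
    rw [Finset.sum_pow_eq_sum_piAntidiag]
    refine Finset.sum_congr rfl fun a _ => ?_
    rw [mul_assoc, ← Finset.prod_mul_distrib]
    simp_rw [mul_pow]
  have hint : ∫ x, (∑ j, u j * x j) ^ (2*q) ∂(stdGaussian d)
      = ∑ a ∈ piAntidiag univ (2*q),
          ((Nat.multinomial univ a : ℝ) * ∏ j, u j ^ a j)
            * ∏ j, ∫ y, y ^ a j ∂(gaussianReal 0 1) := by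
    simp_rw [hexp]
    rw [integral_finset_sum _ (fun a _ => (integrable_std_monomial a).const_mul _)]
    exact Finset.sum_congr rfl fun a _ => by
      rw [integral_const_mul, integral_std_monomial]
  rw [hint]
  -- each term is nonnegative
  set t : (Fin d → ℕ) → ℝ := fun a =>
    ((Nat.multinomial univ a : ℝ) * ∏ j, u j ^ a j)
      * ∏ j, ∫ y, y ^ a j ∂(gaussianReal 0 1) with ht
  have htnonneg : ∀ a : Fin d → ℕ, 0 ≤ t a := by
    intro a
    by_cases hall : ∀ j, Even (a j)
    · have h1 : 0 ≤ ∏ j, u j ^ a j :=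
        Finset.prod_nonneg fun j _ => (hall j).pow_nonneg _
      have h2 : 0 ≤ ∏ j, ∫ y, y ^ a j ∂(gaussianReal 0 1) := by
        refine Finset.prod_nonneg fun j _ => ?_
        obtain ⟨c, hc⟩ := hall j
        rw [show a j = 2 * c by omega]
        exact moment_even_nonneg c
      have h0 : (0:ℝ) ≤ (Nat.multinomial univ a : ℝ) := Nat.cast_nonneg _
      positivity
    · push_neg at hall
      obtain ⟨j, hj⟩ := hall
      rw [Nat.not_even_iff_odd] at hj
      obtain ⟨c, hc⟩ := hj
      have : ∫ y, y ^ a j ∂(gaussianReal 0 1) = 0 := by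
        rw [hc]; exact moment_odd c
      have hz : (∏ j, ∫ y, y ^ a j ∂(gaussianReal 0 1)) = 0 :=
        Finset.prod_eq_zero (Finset.mem_univ j) this
      rw [ht]
      simp only
      rw [hz, mul_zero]
  -- restrict to the image of doubling
  set D : (Fin d → ℕ) → (Fin d → ℕ) := fun b j => 2 * b j with hD
  have hsub : Finset.image D (piAntidiag univ q) ⊆ piAntidiag univ (2*q) := by
    intro a ha
    rw [Finset.mem_image] at ha
    obtain ⟨b, hb, rfl⟩ := ha
    rw [Finset.mem_piAntidiag] at hb ⊢
    refine ⟨?_, fun i _ => Finset.mem_univ i⟩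
    rw [hD]
    rw [← Finset.mul_sum, hb.1]
  have hinj : ∀ b ∈ piAntidiag univ q, ∀ b' ∈ piAntidiag univ q, D b = D b' → b = b' := by
    intro b _ b' _ h
    funext j
    have := congrFun h j
    simp only [hD] at this
    omega
  have hge : ∑ a ∈ piAntidiag univ (2*q), t a ≥ ∑ b ∈ piAntidiag univ q, t (D b) := by
    rw [← Finset.sum_image hinj]
    exact Finset.sum_le_sum_of_subset_of_nonneg hsub fun a _ _ => htnonneg a
  refine le_trans ?_ hge
  -- evaluate the doubled sum
  have heval : ∀ b ∈ piAntidiag univ q,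
      t (D b) = (((2*q).factorial : ℝ) / (2^q * (q.factorial : ℝ)))
        * ((Nat.multinomial univ b : ℝ) * ∏ j, (u j ^ 2) ^ b j) := by
    intro b hb
    rw [Finset.mem_piAntidiag] at hb
    have hkey := key_identity q b hb.1
    rw [ht]
    simp only [hD]
    rw [Finset.prod_congr rfl (fun j (_ : j ∈ (univ : Finset (Fin d))) => moment_even (b j))]
    have hupow : ∀ j : Fin d, u j ^ (2 * b j) = (u j ^ 2) ^ b j := fun j => by
      rw [← pow_mul]
    rw [Finset.prod_congr rfl (fun j _ => hupow j)]
    linear_combination (∏ j, (u j ^ 2) ^ b j) * hkey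
  rw [Finset.sum_congr rfl heval, ← Finset.mul_sum]
  have : ∑ b ∈ piAntidiag univ q, (Nat.multinomial univ b : ℝ) * ∏ j, (u j ^ 2) ^ b j
      = (∑ j, u j ^ 2) ^ q := (Finset.sum_pow_eq_sum_piAntidiag univ (fun j => u j ^ 2) q).symm
  rw [this, hu, one_pow, mul_one]

lemma sq_sum_expand {d : ℕ} (k : ℕ) (x : Fin d → ℝ) :
    (∑ j, x j ^ 2) ^ k
      = ∑ a ∈ piAntidiag univ k, (Nat.multinomial univ a : ℝ) * ∏ j, x j ^ (2 * a j) := by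
  rw [Finset.sum_pow_eq_sum_piAntidiag]
  refine Finset.sum_congr rfl fun a _ => ?_
  congr 1
  exact Finset.prod_congr rfl fun j _ => by rw [← pow_mul]

lemma integrable_sq_sum_pow {d : ℕ} (k : ℕ) :
    Integrable (fun x : Fin d → ℝ => (∑ j, x j ^ 2) ^ k) (stdGaussian d) := by
  have : (fun x : Fin d → ℝ => (∑ j, x j ^ 2) ^ k)
      = fun x => ∑ a ∈ piAntidiag univ k,
          (Nat.multinomial univ a : ℝ) * ∏ j, x j ^ (2 * a j) := by
    ext x; exact sq_sum_expand k x
  rw [this]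
  exact integrable_finset_sum _ fun a _ =>
    (integrable_std_monomial (fun j => 2 * a j)).const_mul _

lemma integral_sq_sum_pow_le {d : ℕ} (k : ℕ) :
    ∫ x, (∑ j, x j ^ 2) ^ k ∂(stdGaussian d)
      ≤ ((k:ℝ)+1) ^ d * (k.factorial : ℝ) * 2 ^ k := by
  have hexp : ∫ x, (∑ j, x j ^ 2) ^ k ∂(stdGaussian d)
      = ∑ a ∈ piAntidiag (univ : Finset (Fin d)) k,
          (Nat.multinomial univ a : ℝ) * ∏ j, ∫ y, y ^ (2 * a j) ∂(gaussianReal 0 1) := by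
    have hco : ∀ x : Fin d → ℝ, (∑ j, x j ^ 2) ^ k
        = ∑ a ∈ piAntidiag univ k, (Nat.multinomial univ a : ℝ) * ∏ j, x j ^ (2 * a j) :=
      sq_sum_expand k
    rw [integral_congr_ae (Eventually.of_forall hco)]
    rw [integral_finset_sum _ (fun a _ =>
      (integrable_std_monomial (fun j => 2 * a j)).const_mul _)]
    exact Finset.sum_congr rfl fun a _ => by
      rw [integral_const_mul, integral_std_monomial (fun j => 2 * a j)]
  rw [hexp]
  -- bound each term by k! * 2^k
  have hterm : ∀ a ∈ piAntidiag (univ : Finset (Fin d)) k,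
      (Nat.multinomial univ a : ℝ) * ∏ j, ∫ y, y ^ (2 * a j) ∂(gaussianReal 0 1)
        ≤ (k.factorial : ℝ) * 2 ^ k := by
    intro a ha
    rw [Finset.mem_piAntidiag] at ha
    rw [Finset.prod_congr rfl (fun j (_ : j ∈ (univ : Finset (Fin d))) =>
      moment_even_eq_choose (a j))]
    have hprodsplit : ∏ j, ((2*(a j)).choose (a j) : ℝ) * ((a j).factorial : ℝ) / 2 ^ (a j)
        = (∏ j, ((2*(a j)).choose (a j) : ℝ)) * (∏ j, ((a j).factorial : ℝ)) / 2 ^ k := by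
      rw [Finset.prod_div_distrib, Finset.prod_mul_distrib, Finset.prod_pow_eq_pow_sum, ha.1]
    rw [hprodsplit]
    have hspec : (∏ j, ((a j).factorial : ℝ)) * (Nat.multinomial univ a : ℝ)
        = (k.factorial : ℝ) := by
      have := Nat.multinomial_spec univ a
      rw [ha.1] at this
      exact_mod_cast this
    have hchoose : (∏ j, ((2*(a j)).choose (a j) : ℝ)) ≤ 4 ^ k := by
      calc (∏ j, ((2*(a j)).choose (a j) : ℝ)) ≤ ∏ j, (4:ℝ) ^ (a j) :=
            Finset.prod_le_prod (fun j _ => Nat.cast_nonneg _)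
              (fun j _ => choose_central_le (a j))
        _ = 4 ^ k := by rw [Finset.prod_pow_eq_pow_sum, ha.1]
    have hrw : (Nat.multinomial univ a : ℝ)
        * ((∏ j, ((2*(a j)).choose (a j) : ℝ)) * (∏ j, ((a j).factorial : ℝ)) / 2 ^ k)
        = (∏ j, ((2*(a j)).choose (a j) : ℝ)) * (k.factorial : ℝ) / 2 ^ k := by
      rw [← hspec]; ring
    rw [hrw]
    have hprodC_nonneg : (0:ℝ) ≤ ∏ j, ((2*(a j)).choose (a j) : ℝ) :=
      Finset.prod_nonneg fun j _ => Nat.cast_nonneg _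
    calc (∏ j, ((2*(a j)).choose (a j) : ℝ)) * (k.factorial : ℝ) / 2 ^ k
        ≤ (4:ℝ) ^ k * (k.factorial : ℝ) / 2 ^ k := by gcongr
      _ = (k.factorial : ℝ) * 2 ^ k := by
          rw [show (4:ℝ) ^ k = 2 ^ k * 2 ^ k by rw [← pow_add, ← two_mul, pow_mul]; norm_num]
          field_simp
  -- sum over all a, bounded by the cardinality
  have hcard : (((piAntidiag (univ : Finset (Fin d)) k).card : ℝ)) ≤ ((k:ℝ)+1) ^ d := by
    have hsub : piAntidiag (univ : Finset (Fin d)) k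
        ⊆ Fintype.piFinset (fun _ : Fin d => Finset.range (k+1)) := by
      intro a ha
      rw [Finset.mem_piAntidiag] at ha
      rw [Fintype.mem_piFinset]
      intro j
      rw [Finset.mem_range]
      have h2 : a j ≤ ∑ i, a i := Finset.single_le_sum (fun i _ => Nat.zero_le _) (mem_univ j)
      rw [ha.1] at h2
      omega
    have hle := Finset.card_le_card hsub
    rw [Fintype.card_piFinset] at hle
    simp only [Finset.card_range, Finset.prod_const, Finset.card_univ, Fintype.card_fin] at hle
    calc (((piAntidiag (univ : Finset (Fin d)) k).card : ℝ)) ≤ (((k+1) ^ d : ℕ) : ℝ) := by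
          exact_mod_cast hle
      _ = ((k:ℝ)+1) ^ d := by push_cast; ring
  calc ∑ a ∈ piAntidiag (univ : Finset (Fin d)) k,
        (Nat.multinomial univ a : ℝ) * ∏ j, ∫ y, y ^ (2 * a j) ∂(gaussianReal 0 1)
      ≤ ∑ _a ∈ piAntidiag (univ : Finset (Fin d)) k, (k.factorial : ℝ) * 2 ^ k :=
        Finset.sum_le_sum hterm
    _ = ((piAntidiag (univ : Finset (Fin d)) k).card : ℝ) * ((k.factorial : ℝ) * 2 ^ k) := by
        rw [Finset.sum_const, nsmul_eq_mul]
    _ ≤ ((k:ℝ)+1) ^ d * ((k.factorial : ℝ) * 2 ^ k) := by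
        apply mul_le_mul_of_nonneg_right hcard (by positivity)
    _ = ((k:ℝ)+1) ^ d * (k.factorial : ℝ) * 2 ^ k := by ring

/-- `(q*d)! ≤ d^(q*d) * (q!)^d`. -/
lemma factorial_mul_le (q d : ℕ) :
    (((q*d).factorial : ℝ)) ≤ (d:ℝ)^(q*d) * ((q.factorial : ℝ))^d := by
  have hnat : (q*d).factorial ≤ d^(q*d) * (q.factorial)^d := by
    have hsum : ∑ _i : Fin d, q = q * d := by
      rw [Finset.sum_const, Finset.card_univ, Fintype.card_fin, smul_eq_mul]; ring
    have hspec := Nat.multinomial_spec (univ : Finset (Fin d)) (fun _ => q)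
    rw [hsum] at hspec
    have hprod : (∏ _i : Fin d, q.factorial) = q.factorial ^ d := by
      rw [Finset.prod_const, Finset.card_univ, Fintype.card_fin]
    rw [hprod] at hspec
    have hMle : Nat.multinomial (univ : Finset (Fin d)) (fun _ => q) ≤ d ^ (q*d) := by
      have hpow := Finset.sum_pow_eq_sum_piAntidiag (univ : Finset (Fin d))
        (fun _ => (1:ℕ)) (q*d)
      simp only [one_pow, Finset.prod_const_one, mul_one] at hpow
      have hone : ∑ _i : Fin d, (1:ℕ) = d := by
        rw [Finset.sum_const, Finset.card_univ, Fintype.card_fin, smul_eq_mul, mul_one]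
      rw [hone] at hpow
      have hmem : (fun _ : Fin d => q) ∈ piAntidiag (univ : Finset (Fin d)) (q*d) := by
        rw [Finset.mem_piAntidiag]
        exact ⟨by rw [hsum], fun i _ => Finset.mem_univ i⟩
      calc Nat.multinomial (univ : Finset (Fin d)) (fun _ => q)
          ≤ ∑ a ∈ piAntidiag (univ : Finset (Fin d)) (q*d), Nat.multinomial univ a :=
            Finset.single_le_sum (f := fun a => Nat.multinomial (univ : Finset (Fin d)) a)
              (fun a _ => Nat.zero_le _) hmem
        _ = d ^ (q*d) := hpow.symm
    calc (q*d).factorial = q.factorial ^ d * Nat.multinomial univ (fun _ : Fin d => q) :=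
          hspec.symm
      _ ≤ q.factorial ^ d * d ^ (q*d) := Nat.mul_le_mul_left _ hMle
      _ = d^(q*d) * q.factorial^d := by ring
  exact_mod_cast hnat

/-- Lower bound on the normalized Gaussian moment. -/
lemma m2q_lower (q : ℕ) (hq : 1 ≤ q) :
    (2:ℝ)^q * (q.factorial : ℝ) / (2*(q:ℝ))
      ≤ ((2*q).factorial : ℝ) / (2^q * (q.factorial : ℝ)) := by
  have hcb := Nat.four_pow_le_two_mul_self_mul_centralBinom q (by omega)
  have hcbR : (4:ℝ)^q ≤ 2*(q:ℝ) * (Nat.centralBinom q : ℝ) := by exact_mod_cast hcb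
  have hfact : ((2*q).factorial : ℝ)
      = (Nat.centralBinom q : ℝ) * (q.factorial : ℝ) * (q.factorial : ℝ) := by
    have := Nat.choose_mul_factorial_mul_factorial (show q ≤ 2*q by omega)
    rw [show 2*q - q = q by omega] at this
    have hcb' : Nat.centralBinom q = (2*q).choose q := rfl
    rw [hcb']
    exact_mod_cast this.symm
  rw [hfact, div_le_div_iff₀ (by positivity) (by positivity)]
  calc (2:ℝ)^q * (q.factorial : ℝ) * (2^q * (q.factorial : ℝ))
      = ((2:ℝ)^q * 2^q) * ((q.factorial : ℝ) * (q.factorial : ℝ)) := by ring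
    _ = (4:ℝ)^q * ((q.factorial : ℝ) * (q.factorial : ℝ)) := by
        rw [← mul_pow]; norm_num
    _ ≤ (2*(q:ℝ) * (Nat.centralBinom q : ℝ)) * ((q.factorial : ℝ) * (q.factorial : ℝ)) := by
        apply mul_le_mul_of_nonneg_right hcbR (by positivity)
    _ = (Nat.centralBinom q : ℝ) * (q.factorial : ℝ) * (q.factorial : ℝ) * (2*(q:ℝ)) := by
        ring

/-- Final arithmetic: combining the chains gives the key inequality. -/
lemma final_arith (d q : ℕ) (hd : 2 ≤ d) (hq : 1 ≤ q) (M : ℝ) (hM : 0 ≤ M)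
    (h : (((2*q).factorial : ℝ) / (2^q * (q.factorial : ℝ))) ^ d
        ≤ M ^ (2*q) * ((((q*d : ℕ)):ℝ)+1) ^ d * (((q*d).factorial : ℝ) * 2 ^ (q*d))) :
    1 ≤ M ^ (2*q) * ((2*(q:ℝ)) * ((q:ℝ)*(d:ℝ)+1)) ^ d * (d:ℝ)^(q*d) := by
  have hq1 : (1:ℝ) ≤ (q:ℝ) := by exact_mod_cast hq
  have hqf : (0:ℝ) < (q.factorial : ℝ) := by
    exact_mod_cast Nat.factorial_pos q
  have hA : (0:ℝ) ≤ (2:ℝ)^q * (q.factorial : ℝ) / (2*(q:ℝ)) := by positivity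
  have hAd := pow_le_pow_left₀ hA (m2q_lower q hq) d
  have hchain := le_trans hAd h
  have hf := factorial_mul_le q d
  have hchain2 : ((2:ℝ)^q * (q.factorial : ℝ) / (2*(q:ℝ))) ^ d
      ≤ M ^ (2*q) * ((q:ℝ)*(d:ℝ)+1) ^ d * (((d:ℝ)^(q*d) * ((q.factorial : ℝ))^d) * 2 ^ (q*d)) := by
    have hcast : (((q*d : ℕ)):ℝ) = (q:ℝ)*(d:ℝ) := by push_cast; ring
    rw [hcast] at hchain
    refine le_trans hchain ?_
    gcongr
  rw [div_pow] at hchain2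
  have hden : (0:ℝ) < ((2*(q:ℝ)))^d := by positivity
  rw [div_le_iff₀ hden] at hchain2
  have hnum : (0:ℝ) < ((2:ℝ)^q * (q.factorial : ℝ))^d := by positivity
  rw [← mul_le_mul_iff_right₀ hnum]
  calc ((2:ℝ)^q * (q.factorial : ℝ))^d * 1 = ((2:ℝ)^q * (q.factorial : ℝ))^d := mul_one _
    _ ≤ M ^ (2*q) * ((q:ℝ)*(d:ℝ)+1) ^ d * (((d:ℝ)^(q*d) * ((q.factorial : ℝ))^d) * 2 ^ (q*d))
        * (2*(q:ℝ))^d := hchain2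
    _ = ((2:ℝ)^q * (q.factorial : ℝ))^d
        * (M ^ (2*q) * ((2*(q:ℝ)) * ((q:ℝ)*(d:ℝ)+1)) ^ d * (d:ℝ)^(q*d)) := by
        rw [mul_pow ((2:ℝ)^q), mul_pow (2*(q:ℝ)), ← pow_mul (2:ℝ) q d]
        ring

/-- Existence of a maximizer of `|∏ ⟨v, xᵢ⟩|` on the unit sphere. -/
lemma exists_max (d : ℕ) (hd : 0 < d) (x : Fin d → Fin d → ℝ) :
    ∃ v : Fin d → ℝ, (∑ j, v j ^ 2 = 1) ∧
      ∀ u : Fin d → ℝ, (∑ j, u j ^ 2 = 1) →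
        |∏ i, ∑ j, u j * x i j| ≤ |∏ i, ∑ j, v j * x i j| := by
  set S : Set (Fin d → ℝ) := {v | ∑ j, v j ^ 2 = 1} with hS
  have hcont_sum : Continuous (fun v : Fin d → ℝ => ∑ j, v j ^ 2) := by
    exact continuous_finset_sum _ fun j _ => (continuous_apply j).pow 2
  have hclosed : IsClosed S := isClosed_eq hcont_sum continuous_const
  have hbdd : Bornology.IsBounded S := by
    apply (Metric.isBounded_closedBall (x := (0 : Fin d → ℝ)) (r := 1)).subset
    intro v hv
    rw [Metric.mem_closedBall, dist_zero_right]
    rw [pi_norm_le_iff_of_nonneg zero_le_one]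
    intro j
    rw [Real.norm_eq_abs]
    have hsq : v j ^ 2 ≤ 1 := by
      calc v j ^ 2 ≤ ∑ i, v i ^ 2 :=
            Finset.single_le_sum (f := fun i => v i ^ 2) (fun i _ => sq_nonneg _)
              (Finset.mem_univ j)
        _ = 1 := hv
    nlinarith [sq_nonneg (|v j| - 1), sq_abs (v j), abs_nonneg (v j)]
  have hcompact : IsCompact S := Metric.isCompact_of_isClosed_isBounded hclosed hbdd
  have hne : S.Nonempty := by
    refine ⟨fun j => if j = ⟨0, hd⟩ then 1 else 0, ?_⟩
    have : ∀ j : Fin d, ((if j = ⟨0, hd⟩ then (1:ℝ) else 0)) ^ 2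
        = if j = ⟨0, hd⟩ then (1:ℝ) else 0 := by
      intro j; split <;> norm_num
    simp only [hS, Set.mem_setOf_eq, this, Finset.sum_ite_eq' Finset.univ, Finset.mem_univ,
      if_true]
  have hcontF : Continuous (fun v : Fin d → ℝ => |∏ i, ∑ j, v j * x i j|) := by
    apply Continuous.abs
    exact continuous_finset_prod _ fun i _ =>
      continuous_finset_sum _ fun j _ => (continuous_apply j).mul continuous_const
  obtain ⟨v, hvS, hvmax⟩ := hcompact.exists_isMaxOn hne hcontF.continuousOn
  exact ⟨v, hvS, fun u hu => hvmax hu⟩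

/-- The pointwise homogeneity bound. -/
lemma pointwise_bound {d q : ℕ} (hq : 1 ≤ q) (hd : 0 < d) (x : Fin d → Fin d → ℝ)
    (v : Fin d → ℝ)
    (hmax : ∀ u : Fin d → ℝ, (∑ j, u j ^ 2 = 1) →
      |∏ i, ∑ j, u j * x i j| ≤ |∏ i, ∑ j, v j * x i j|)
    (g : Fin d → ℝ) :
    ∏ i, (∑ j, x i j * g j) ^ (2*q)
      ≤ |∏ i, ∑ j, v j * x i j| ^ (2*q) * (∑ j, g j ^ 2) ^ (q*d) := by
  set M : ℝ := |∏ i, ∑ j, v j * x i j| with hM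
  have hM0 : 0 ≤ M := abs_nonneg _
  set s : ℝ := ∑ j, g j ^ 2 with hs
  have hs0 : 0 ≤ s := Finset.sum_nonneg fun j _ => sq_nonneg _
  rcases eq_or_lt_of_le hs0 with hzero | hpos
  · -- all coordinates vanish
    have hg : ∀ j, g j = 0 := by
      intro j
      have h2 := (Finset.sum_eq_zero_iff_of_nonneg (fun i (_ : i ∈ Finset.univ) =>
        sq_nonneg (g i))).mp hzero.symm j (Finset.mem_univ j)
      exact (pow_eq_zero_iff two_ne_zero).mp h2
    have hL : ∏ i, (∑ j, x i j * g j) ^ (2*q) = 0 := by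
      apply Finset.prod_eq_zero (Finset.mem_univ (⟨0, hd⟩ : Fin d))
      rw [Finset.sum_eq_zero fun j _ => by rw [hg j, mul_zero]]
      exact zero_pow (by omega)
    have hR : s ^ (q*d) = 0 := by
      rw [← hzero]
      exact zero_pow (by positivity)
    rw [hL, hR, mul_zero]
  · set r : ℝ := Real.sqrt s with hr
    have hrpos : 0 < r := Real.sqrt_pos.mpr hpos
    have hr2 : r ^ 2 = s := Real.sq_sqrt (le_of_lt hpos)
    set u : Fin d → ℝ := fun j => g j / r with hu
    have husum : ∑ j, u j ^ 2 = 1 := by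
      have hji : ∀ j : Fin d, u j ^ 2 = g j ^ 2 / s := by
        intro j
        rw [hu]
        simp only
        rw [div_pow, hr2]
      rw [Finset.sum_congr rfl fun j _ => hji j, ← Finset.sum_div, ← hs,
        div_self (ne_of_gt hpos)]
    have hgu : ∀ j, g j = r * u j := fun j => by
      rw [hu]; field_simp
    have hkey : ∀ i, (∑ j, x i j * g j) = r * ∑ j, u j * x i j := by
      intro i
      rw [Finset.mul_sum]
      refine Finset.sum_congr rfl fun j _ => ?_
      rw [hgu j]; ring
    have hMu := hmax u husum
    calc ∏ i, (∑ j, x i j * g j) ^ (2*q)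
        = ∏ i, (r ^ (2*q) * (∑ j, u j * x i j) ^ (2*q)) := by
          refine Finset.prod_congr rfl fun i _ => ?_
          rw [hkey i, mul_pow]
      _ = (r ^ (2*q)) ^ d * ∏ i, (∑ j, u j * x i j) ^ (2*q) := by
          rw [Finset.prod_mul_distrib, Finset.prod_const, Finset.card_univ, Fintype.card_fin]
      _ = s ^ (q*d) * ∏ i, (∑ j, u j * x i j) ^ (2*q) := by
          rw [← pow_mul, show 2*q*d = 2*(q*d) by ring, pow_mul, hr2]
      _ = s ^ (q*d) * (∏ i, ∑ j, u j * x i j) ^ (2*q) := by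
          rw [Finset.prod_pow]
      _ = s ^ (q*d) * |∏ i, ∑ j, u j * x i j| ^ (2*q) := by
          rw [Even.pow_abs ⟨q, by ring⟩]
      _ ≤ s ^ (q*d) * M ^ (2*q) := by
          apply mul_le_mul_of_nonneg_left _ (by positivity)
          exact pow_le_pow_left₀ (abs_nonneg _) hMu _
      _ = M ^ (2*q) * s ^ (q*d) := by ring

/-- The correction factor tends to `1`. -/
lemma tendsto_correction (d : ℕ) (hd : 2 ≤ d) :
    Tendsto (fun q : ℕ => ((2*(q:ℝ)) * ((q:ℝ)*(d:ℝ)+1)) ^ (-(d:ℝ)/(2*(q:ℝ)))) atTop (𝓝 1) := by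
  have hd1 : (1:ℝ) ≤ (d:ℝ) := by exact_mod_cast (by omega : 1 ≤ d)
  -- the exponentiated logarithm
  set e : ℕ → ℝ := fun q => (-(d:ℝ)/(2*(q:ℝ))) * Real.log ((2*(q:ℝ)) * ((q:ℝ)*(d:ℝ)+1)) with he
  have hlogq : Tendsto (fun q : ℕ => Real.log (q:ℝ) / (q:ℝ)) atTop (𝓝 0) := by
    have h1 : Tendsto (fun y : ℝ => Real.log y / y) atTop (𝓝 0) :=
      Real.isLittleO_log_id_atTop.tendsto_div_nhds_zero
    exact h1.comp tendsto_natCast_atTop_atTop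
  have hinvq : Tendsto (fun q : ℕ => 1/(q:ℝ)) atTop (𝓝 0) := tendsto_one_div_atTop_nhds_zero_nat
  have hl : Tendsto (fun q : ℕ =>
      -((d:ℝ)/2) * (Real.log (4*(d:ℝ)) * (1/(q:ℝ))) - (d:ℝ) * (Real.log (q:ℝ) / (q:ℝ)))
      atTop (𝓝 0) := by
    have h1 := (hinvq.const_mul (Real.log (4*(d:ℝ)))).const_mul (-((d:ℝ)/2))
    have h2 := hlogq.const_mul (d:ℝ)
    have := h1.sub h2
    simpa using this
  have hsq : Tendsto e atTop (𝓝 0) := by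
    apply tendsto_of_tendsto_of_tendsto_of_le_of_le' hl tendsto_const_nhds
    · -- lower bound eventually
      filter_upwards [eventually_ge_atTop 1] with q hq1
      have hq1R : (1:ℝ) ≤ (q:ℝ) := by exact_mod_cast hq1
      have hbpos : (0:ℝ) < (2*(q:ℝ)) * ((q:ℝ)*(d:ℝ)+1) := by positivity
      have hlogle : Real.log ((2*(q:ℝ)) * ((q:ℝ)*(d:ℝ)+1))
          ≤ Real.log (4*(d:ℝ)) + 2 * Real.log (q:ℝ) := by
        have hle : (2*(q:ℝ)) * ((q:ℝ)*(d:ℝ)+1) ≤ (4*(d:ℝ)) * (q:ℝ)^2 := by nlinarith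
        calc Real.log ((2*(q:ℝ)) * ((q:ℝ)*(d:ℝ)+1)) ≤ Real.log ((4*(d:ℝ)) * (q:ℝ)^2) :=
              Real.log_le_log hbpos hle
          _ = Real.log (4*(d:ℝ)) + 2 * Real.log (q:ℝ) := by
              rw [Real.log_mul (by positivity) (by positivity), Real.log_pow]
              push_cast; ring
      rw [he]
      simp only
      have hcoef : (0:ℝ) ≤ (d:ℝ)/(2*(q:ℝ)) := by positivity
      have := mul_le_mul_of_nonneg_left hlogle hcoef
      calc -((d:ℝ)/2) * (Real.log (4*(d:ℝ)) * (1/(q:ℝ))) - (d:ℝ) * (Real.log (q:ℝ) / (q:ℝ))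
          = -(((d:ℝ)/(2*(q:ℝ))) * (Real.log (4*(d:ℝ)) + 2 * Real.log (q:ℝ))) := by
            field_simp
            ring
        _ ≤ -(((d:ℝ)/(2*(q:ℝ))) * Real.log ((2*(q:ℝ)) * ((q:ℝ)*(d:ℝ)+1))) := by
            exact neg_le_neg this
        _ = (-(d:ℝ)/(2*(q:ℝ))) * Real.log ((2*(q:ℝ)) * ((q:ℝ)*(d:ℝ)+1)) := by ring
    · -- upper bound eventually
      filter_upwards [eventually_ge_atTop 1] with q hq1
      have hq1R : (1:ℝ) ≤ (q:ℝ) := by exact_mod_cast hq1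
      have hqd : (1:ℝ) ≤ (q:ℝ)*(d:ℝ) := by nlinarith
      have hbase : (1:ℝ) ≤ (2*(q:ℝ)) * ((q:ℝ)*(d:ℝ)+1) := by nlinarith
      have hlog0 : 0 ≤ Real.log ((2*(q:ℝ)) * ((q:ℝ)*(d:ℝ)+1)) := Real.log_nonneg hbase
      rw [he]
      simp only
      apply mul_nonpos_of_nonpos_of_nonneg _ hlog0
      have : (0:ℝ) < 2*(q:ℝ) := by positivity
      apply div_nonpos_of_nonpos_of_nonneg (neg_nonpos_of_nonneg (by positivity)) this.le
  have hfinal := (Real.continuous_exp.tendsto 0).comp hsq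
  rw [Real.exp_zero] at hfinal
  apply hfinal.congr'
  filter_upwards [eventually_ge_atTop 1] with q hq1
  have hq1R : (1:ℝ) ≤ (q:ℝ) := by exact_mod_cast hq1
  have hbpos : (0:ℝ) < (2*(q:ℝ)) * ((q:ℝ)*(d:ℝ)+1) := by positivity
  rw [Function.comp_apply, he]
  simp only
  rw [Real.rpow_def_of_pos hbpos]
  ring_nf

end GPCaux

/-- The Gaussian product conjecture implies the real polarization conjecture:
if for all integers `q ≥ 1` and every centered Gaussian vector `(G₁,…,G_d)` with unit
variances one has `E[G₁^{2q} ⋯ G_d^{2q}] ≥ ∏ E[G_i^{2q}]`, then for any `d ≥ 2` and unit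
vectors `x₁,…,x_d ∈ ℝ^d` there is a unit vector `v` with `|⟨v,x₁⟩ ⋯ ⟨v,x_d⟩| ≥ d^{-d/2}`. -/
theorem gaussian_product_implies_polarization
    (d : ℕ) (hd : 2 ≤ d)
    (hGPC : ∀ q : ℕ, 1 ≤ q → ∀ v : Fin d → (Fin d → ℝ), (∀ i, ∑ j, v i j ^ 2 = 1) →
      ∫ x, ∏ i, (∑ j, v i j * x j) ^ (2 * q) ∂(stdGaussian d) ≥
        ∏ i, ∫ x, (∑ j, v i j * x j) ^ (2 * q) ∂(stdGaussian d))
    (x : Fin d → (Fin d → ℝ)) (hx : ∀ i, ∑ j, x i j ^ 2 = 1) :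
    ∃ v : Fin d → ℝ, ∑ j, v j ^ 2 = 1 ∧
      |∏ i, ∑ j, v j * x i j| ≥ (d : ℝ) ^ (-(d : ℝ) / 2) := by
  have hd0 : 0 < d := by omega
  obtain ⟨v, hvS, hvmax⟩ := GPCaux.exists_max d hd0 x
  refine ⟨v, hvS, ?_⟩
  set M : ℝ := |∏ i, ∑ j, v j * x i j| with hM
  have hM0 : 0 ≤ M := abs_nonneg _
  have hd1 : (1:ℝ) ≤ (d:ℝ) := by exact_mod_cast (by omega : 1 ≤ d)
  have hdpos : (0:ℝ) < (d:ℝ) := by linarith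
  have hkey : ∀ q : ℕ, 1 ≤ q →
      1 ≤ M ^ (2*q) * ((2*(q:ℝ)) * ((q:ℝ)*(d:ℝ)+1)) ^ d * (d:ℝ)^(q*d) := by
    intro q hq
    apply GPCaux.final_arith d q hd hq M hM0
    have hm0 : (0:ℝ) ≤ ((2*q).factorial : ℝ) / (2^q * (q.factorial : ℝ)) := by positivity
    have h2 : (((2*q).factorial : ℝ) / (2^q * (q.factorial : ℝ))) ^ d
        ≤ ∏ i, ∫ g, (∑ j, x i j * g j) ^ (2*q) ∂(stdGaussian d) := by
      calc (((2*q).factorial : ℝ) / (2^q * (q.factorial : ℝ))) ^ d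
          = ∏ _i : Fin d, (((2*q).factorial : ℝ) / (2^q * (q.factorial : ℝ))) := by
            rw [Finset.prod_const, Finset.card_univ, Fintype.card_fin]
        _ ≤ _ := Finset.prod_le_prod (fun i _ => hm0)
            (fun i _ => GPCaux.moment_inner_ge q (x i) (hx i))
    have h1 := hGPC q hq x hx
    have h3 : ∫ g, ∏ i, (∑ j, x i j * g j) ^ (2*q) ∂(stdGaussian d)
        ≤ M ^ (2*q) * ∫ g, (∑ j, g j ^ 2) ^ (q*d) ∂(stdGaussian d) := by
      rw [← integral_const_mul]
      apply integral_mono_of_nonneg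
      · exact Eventually.of_forall fun g => Finset.prod_nonneg fun i _ =>
          Even.pow_nonneg ⟨q, by ring⟩ _
      · exact (GPCaux.integrable_sq_sum_pow (q*d)).const_mul _
      · exact Eventually.of_forall fun g => GPCaux.pointwise_bound hq hd0 x v hvmax g
    have h4 := GPCaux.integral_sq_sum_pow_le (d := d) (q*d)
    calc (((2*q).factorial : ℝ) / (2^q * (q.factorial : ℝ))) ^ d
        ≤ ∏ i, ∫ g, (∑ j, x i j * g j) ^ (2*q) ∂(stdGaussian d) := h2
      _ ≤ ∫ g, ∏ i, (∑ j, x i j * g j) ^ (2*q) ∂(stdGaussian d) := h1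
      _ ≤ M ^ (2*q) * ∫ g, (∑ j, g j ^ 2) ^ (q*d) ∂(stdGaussian d) := h3
      _ ≤ M ^ (2*q) * ((((q*d : ℕ)):ℝ)+1) ^ d * (((q*d).factorial : ℝ) * 2 ^ (q*d)) := by
          have h5 := mul_le_mul_of_nonneg_left h4 (pow_nonneg hM0 (2*q))
          calc M ^ (2*q) * ∫ g, (∑ j, g j ^ 2) ^ (q*d) ∂(stdGaussian d)
              ≤ M ^ (2*q) * ((((q*d:ℕ):ℝ)+1) ^ d * ((q*d).factorial : ℝ) * 2^(q*d)) := h5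
            _ = M ^ (2*q) * ((((q*d : ℕ)):ℝ)+1) ^ d * (((q*d).factorial : ℝ) * 2 ^ (q*d)) := by
                ring
  -- rooting step
  have hroot : ∀ q : ℕ, 1 ≤ q →
      ((2*(q:ℝ)) * ((q:ℝ)*(d:ℝ)+1)) ^ (-(d:ℝ)/(2*(q:ℝ))) * (d:ℝ) ^ (-(d:ℝ)/2) ≤ M := by
    intro q hq
    have h := hkey q hq
    have hq1R : (1:ℝ) ≤ (q:ℝ) := by exact_mod_cast hq
    have hq0 : (q:ℝ) ≠ 0 := by linarith
    set B : ℝ := (2*(q:ℝ)) * ((q:ℝ)*(d:ℝ)+1) with hB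
    have hBpos : 0 < B := by
      rw [hB]
      exact mul_pos (by linarith) (by nlinarith)
    have hCpos : (0:ℝ) < B^d * (d:ℝ)^(q*d) := by positivity
    have hMpow : (B^d * (d:ℝ)^(q*d))⁻¹ ≤ M ^ (2*q) := by
      rw [inv_eq_one_div, div_le_iff₀ hCpos]
      calc (1:ℝ) ≤ M ^ (2*q) * B ^ d * (d:ℝ)^(q*d) := h
        _ = M ^ (2*q) * (B^d * (d:ℝ)^(q*d)) := by ring
    have h2q0 : (((2*q:ℕ)):ℝ) ≠ 0 := Nat.cast_ne_zero.mpr (by omega)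
    set s : ℝ := ((((2*q:ℕ)):ℝ))⁻¹ with hsdef
    have hs0 : (0:ℝ) ≤ s := by positivity
    have hrpow := Real.rpow_le_rpow (le_of_lt (inv_pos.mpr hCpos)) hMpow hs0
    have hMr : ((M ^ (2*q) : ℝ)) ^ s = M := by
      rw [← Real.rpow_natCast M (2*q), ← Real.rpow_mul hM0, hsdef,
        mul_inv_cancel₀ h2q0, Real.rpow_one]
    have e1 : ((B^d * (d:ℝ)^(q*d))⁻¹ : ℝ) ^ s = ((B^d:ℝ) ^ s)⁻¹ * (((d:ℝ)^(q*d) : ℝ) ^ s)⁻¹ := by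
      rw [Real.inv_rpow (le_of_lt hCpos), Real.mul_rpow (by positivity) (by positivity),
        mul_inv]
    have e2 : ((B^d : ℝ) ^ s)⁻¹ = B ^ (-(d:ℝ)/(2*(q:ℝ))) := by
      rw [← Real.rpow_natCast B d, ← Real.rpow_mul hBpos.le, ← Real.rpow_neg hBpos.le]
      congr 1
      rw [hsdef]
      push_cast
      field_simp
    have e3 : (((d:ℝ)^(q*d) : ℝ) ^ s)⁻¹ = (d:ℝ) ^ (-(d:ℝ)/2) := by
      rw [← Real.rpow_natCast (d:ℝ) (q*d), ← Real.rpow_mul hdpos.le, ← Real.rpow_neg hdpos.le]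
      congr 1
      rw [hsdef]
      push_cast
      field_simp
    rw [hMr, e1, e2, e3] at hrpow
    exact hrpow
  have hlim := GPCaux.tendsto_correction d hd
  have hlim2 : Tendsto (fun q : ℕ =>
      ((2*(q:ℝ)) * ((q:ℝ)*(d:ℝ)+1)) ^ (-(d:ℝ)/(2*(q:ℝ))) * (d:ℝ) ^ (-(d:ℝ)/2)) atTop
      (𝓝 ((d:ℝ) ^ (-(d:ℝ)/2))) := by
    have := hlim.mul_const ((d:ℝ) ^ (-(d:ℝ)/2))
    simpa using this
  exact le_of_tendsto hlim2 (eventually_atTop.mpr ⟨1, fun q hq => hroot q hq⟩)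

end GPCproof
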